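/- arXiv:0707.2125 — 3 statements merged into one kernel-verified Lean document; each statement's English description precedes it below -/
import Mathlib

section
/- Let n ≥ 1. The duality map F : Bⁿ → ℂⁿ, F(z) = z/√(1 − ‖z‖²), satisfies F*ω₀ = ω₋; that is, for all z ∈ Bⁿ and all u, v ∈ ℂⁿ, ω₀(DF(z)u, DF(z)v) = ω₋(z)(u,v). -/
open Complex Set

noncomputable section

/-- The open unit ball in `ℂⁿ` (with the standard Hermitian norm). -/
def unitBall (n : ℕ) : Set (EuclideanSpace ℂ (Fin n)) := {z | ‖z‖ < 1}

/-- The standard Hermitian inner product `⟪u,v⟫ = Σⱼ conj uⱼ * vⱼ` on `ℂⁿ`. -/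
def hermInner {n : ℕ} (u v : EuclideanSpace ℂ (Fin n)) : ℂ := inner ℂ u v

/-- The flat symplectic form `ω₀(u,v) = Im ⟪u,v⟫` on `ℂⁿ`. -/
def omega0 {n : ℕ} (u v : EuclideanSpace ℂ (Fin n)) : ℝ := (hermInner u v).im

/-- The hyperbolic symplectic form on the unit ball:
`ω₋(z)(u,v) = Im (((1 - ‖z‖²)·⟪u,v⟫ + ⟪u,z⟫·⟪z,v⟫) / (1 - ‖z‖²)²)`. -/
def omegaMinus {n : ℕ} (z u v : EuclideanSpace ℂ (Fin n)) : ℝ :=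
  (((((1 : ℝ) - ‖z‖ ^ 2 : ℝ) : ℂ) * hermInner u v + hermInner u z * hermInner z v) /
    ((((1 : ℝ) - ‖z‖ ^ 2 : ℝ) : ℂ)) ^ 2).im

/-- The Bergman operator of the unit ball at `z`:
`B(z,z)v = (1 - ‖z‖²)·(v - ⟪z,v⟫·z)`. -/
def bergman {n : ℕ} (z v : EuclideanSpace ℂ (Fin n)) : EuclideanSpace ℂ (Fin n) :=
  ((((1 : ℝ) - ‖z‖ ^ 2 : ℝ) : ℂ)) • (v - hermInner z v • z)

/-- `f` is a smooth diffeomorphism of `s` onto `t`: it is `C^∞` on `s`, maps `s` to `t`,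
and has a `C^∞` inverse mapping `t` to `s`. -/
def IsSmoothDiffeoOn {E F : Type*} [NormedAddCommGroup E] [NormedSpace ℝ E]
    [NormedAddCommGroup F] [NormedSpace ℝ F] (f : E → F) (s : Set E) (t : Set F) : Prop :=
  ContDiffOn ℝ (⊤ : ℕ∞) f s ∧ Set.MapsTo f s t ∧
    ∃ g : F → E, ContDiffOn ℝ (⊤ : ℕ∞) g t ∧ Set.MapsTo g t s ∧ Set.InvOn g f s t

/-- The duality map of the unit ball: `F(z) = z / √(1 - ‖z‖²)`. -/
def dualityMap {n : ℕ} (z : EuclideanSpace ℂ (Fin n)) : EuclideanSpace ℂ (Fin n) :=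
  (Real.sqrt (1 - ‖z‖ ^ 2))⁻¹ • z

namespace Aux

variable {n : ℕ}

lemma real_inner_eq (z u : EuclideanSpace ℂ (Fin n)) :
    (inner ℝ z u : ℝ) = (inner ℂ z u : ℂ).re := by
  simp [PiLp.inner_apply, Complex.re_sum]

lemma inner_real_smul_left (r : ℝ) (x y : EuclideanSpace ℂ (Fin n)) :
    (inner ℂ (r • x) y : ℂ) = (r : ℂ) * inner ℂ x y := by
  rw [← algebraMap_smul ℂ r x, inner_smul_left]
  simp [Complex.coe_algebraMap, conj_ofReal]

lemma inner_real_smul_right (r : ℝ) (x y : EuclideanSpace ℂ (Fin n)) :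
    (inner ℂ x (r • y) : ℂ) = (r : ℂ) * inner ℂ x y := by
  rw [← algebraMap_smul ℂ r y, inner_smul_right]
  simp [Complex.coe_algebraMap]

lemma dmap_fderiv (z : EuclideanSpace ℂ (Fin n)) (hz : ‖z‖ < 1)
    (u : EuclideanSpace ℂ (Fin n)) :
    fderiv ℝ dualityMap z u = (Real.sqrt (1 - ‖z‖ ^ 2))⁻¹ • u +
      (((inner ℂ z u : ℂ).re) / ((1 - ‖z‖ ^ 2) * Real.sqrt (1 - ‖z‖ ^ 2))) • z := by
  set t := 1 - ‖z‖ ^ 2 with htdef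
  have ht : 0 < t := by
    have : ‖z‖ ^ 2 < 1 := by nlinarith [norm_nonneg z]
    linarith
  have hs : Real.sqrt t ≠ 0 := (Real.sqrt_pos.mpr ht).ne'
  have h2 : HasFDerivAt (fun z : EuclideanSpace ℂ (Fin n) => (1 : ℝ) - ‖z‖ ^ 2)
      (-(2 • innerSL ℝ z)) z :=
    ((hasStrictFDerivAt_norm_sq z).hasFDerivAt).const_sub 1
  have h3 : HasDerivAt (fun s : ℝ => (Real.sqrt s)⁻¹)
      (-(1 / (2 * Real.sqrt t)) / (Real.sqrt t) ^ 2) t :=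
    (Real.hasDerivAt_sqrt ht.ne').inv hs
  have h4 := h3.comp_hasFDerivAt z h2
  have h5 := h4.smul (hasFDerivAt_id z)
  have h6 : HasFDerivAt (dualityMap (n := n))
      ((Real.sqrt t)⁻¹ • ContinuousLinearMap.id ℝ (EuclideanSpace ℂ (Fin n)) +
        ((-(1 / (2 * Real.sqrt t)) / (Real.sqrt t) ^ 2) • -(2 • innerSL ℝ z)).smulRight z) z := h5
  rw [h6.fderiv]
  have hsq : Real.sqrt t * Real.sqrt t = t := Real.mul_self_sqrt ht.le
  simp only [ContinuousLinearMap.add_apply, ContinuousLinearMap.smul_apply,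
    ContinuousLinearMap.id_apply, ContinuousLinearMap.smulRight_apply,
    ContinuousLinearMap.neg_apply, innerSL_apply_apply]
  congr 1
  rw [real_inner_eq]
  congr 1
  have hst : Real.sqrt t ^ 2 = t := Real.sq_sqrt ht.le
  simp only [smul_eq_mul, nsmul_eq_mul, Nat.cast_ofNat]
  rw [← hst]
  field_simp
  rw [Real.sqrt_sq (Real.sqrt_nonneg t)]

end Aux

/-- The duality map of the unit ball pulls the flat symplectic form back to the
hyperbolic form: `F*ω₀ = ω₋`. -/
theorem ball_dualityMap_pullback_flat_eq_hyperbolic (n : ℕ) (hn : 1 ≤ n) :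
    ∀ z ∈ unitBall n, ∀ u v : EuclideanSpace ℂ (Fin n),
      omega0 (fderiv ℝ dualityMap z u) (fderiv ℝ dualityMap z v) = omegaMinus z u v := by
  intro z hz u v
  have hz' : ‖z‖ < 1 := hz
  set t := 1 - ‖z‖ ^ 2 with htdef
  have ht : 0 < t := by
    have : ‖z‖ ^ 2 < 1 := by nlinarith [norm_nonneg z]
    linarith
  have hs : Real.sqrt t ≠ 0 := (Real.sqrt_pos.mpr ht).ne'
  rw [Aux.dmap_fderiv z hz', Aux.dmap_fderiv z hz']
  set A : ℂ := inner ℂ u v with hA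
  set B : ℂ := inner ℂ z u with hB
  set C : ℂ := inner ℂ z v with hC
  have hBu : (inner ℂ u z : ℂ) = starRingEnd ℂ B := by rw [hB, inner_conj_symm]
  have hzz : (inner ℂ z z : ℂ) = (((1 : ℝ) - t : ℝ) : ℂ) := by
    rw [inner_self_eq_norm_sq_to_K, htdef]; push_cast; norm_num
  unfold omega0 omegaMinus hermInner
  simp only [inner_add_left, inner_add_right, Aux.inner_real_smul_left,
    Aux.inner_real_smul_right, hBu, hzz]
  rw [← hC, ← htdef]
  clear_value A B C t
  clear hA hB hC hzz hBu htdef hz hz' hn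
  have hst : Real.sqrt t ^ 2 = t := Real.sq_sqrt ht.le
  have hden : ((t : ℂ)) ^ 2 = ((t ^ 2 : ℝ) : ℂ) := by push_cast; ring
  rw [hden]
  rw [Complex.div_ofReal_im]
  simp only [Complex.add_im, Complex.mul_im, Complex.ofReal_re, Complex.ofReal_im,
    Complex.conj_re, Complex.conj_im, Complex.mul_re]
  set s := Real.sqrt t with hsdef
  have hs' : s ≠ 0 := hs
  rw [← hst]
  clear_value s
  field_simp
  ring
end
end

section
/- Let n ≥ 1. The duality map F : Bⁿ → ℂⁿ, F(z) = z/√(1 − ‖z‖²), satisfies F*ω₊ = ω₀; that is, for all z ∈ Bⁿ and all u, v ∈ ℂⁿ, ω₊(F(z))(DF(z)u, DF(z)v) = ω₀(u,v). -/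
open Complex Set

noncomputable section

/-- The Fubini-Study form on `ℂⁿ`:
`ω₊(z)(u,v) = Im (((1 + ‖z‖²)·⟪u,v⟫ - ⟪u,z⟫·⟪z,v⟫) / (1 + ‖z‖²)²)`. -/
def omegaPlus {n : ℕ} (z u v : EuclideanSpace ℂ (Fin n)) : ℝ :=
  (((((1 : ℝ) + ‖z‖ ^ 2 : ℝ) : ℂ) * hermInner u v - hermInner u z * hermInner z v) /
    ((((1 : ℝ) + ‖z‖ ^ 2 : ℝ) : ℂ)) ^ 2).im

variable {n : ℕ}

lemma herm_real_smul_left (r : ℝ) (x y : EuclideanSpace ℂ (Fin n)) :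
    hermInner (r • x) y = (r : ℂ) * hermInner x y := by
  rw [hermInner, hermInner, RCLike.real_smul_eq_coe_smul (K := ℂ), inner_smul_left]
  simp

lemma herm_real_smul_right (r : ℝ) (x y : EuclideanSpace ℂ (Fin n)) :
    hermInner x (r • y) = (r : ℂ) * hermInner x y := by
  rw [hermInner, hermInner, RCLike.real_smul_eq_coe_smul (K := ℂ), inner_smul_right]
  simp

lemma herm_add_left (x y w : EuclideanSpace ℂ (Fin n)) :
    hermInner (x + y) w = hermInner x w + hermInner y w := inner_add_left x y w

lemma herm_add_right (x y w : EuclideanSpace ℂ (Fin n)) :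
    hermInner x (y + w) = hermInner x y + hermInner x w := inner_add_right x y w

lemma herm_self (z : EuclideanSpace ℂ (Fin n)) : hermInner z z = ((‖z‖ ^ 2 : ℝ) : ℂ) := by
  rw [hermInner, inner_self_eq_norm_sq_to_K]; simp

lemma herm_re (x y : EuclideanSpace ℂ (Fin n)) :
    (inner ℝ x y : ℝ) = (hermInner x y).re := by
  simp [hermInner, PiLp.inner_apply, Complex.inner]

lemma herm_conj (x y : EuclideanSpace ℂ (Fin n)) :
    hermInner x y = starRingEnd ℂ (hermInner y x) := (inner_conj_symm x y).symm

lemma duality_fderiv (z : EuclideanSpace ℂ (Fin n)) (hz : ‖z‖ < 1)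
    (u : EuclideanSpace ℂ (Fin n)) :
    fderiv ℝ dualityMap z u =
      (Real.sqrt (1 - ‖z‖ ^ 2))⁻¹ •
        (u + ((1 - ‖z‖ ^ 2)⁻¹ * (inner ℝ z u : ℝ)) • z) := by
  have ht : (0:ℝ) < 1 - ‖z‖ ^ 2 := by nlinarith [norm_nonneg z]
  set t := 1 - ‖z‖ ^ 2 with htdef
  have hr : 0 < Real.sqrt t := Real.sqrt_pos.mpr ht
  have hnorm : HasFDerivAt (fun w : EuclideanSpace ℂ (Fin n) => 1 - ‖w‖ ^ 2)
      (-((2:ℕ) • innerSL ℝ z)) z := ((hasStrictFDerivAt_norm_sq z).hasFDerivAt).const_sub 1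
  have hsq : HasDerivAt (fun x : ℝ => (Real.sqrt x)⁻¹)
      (-(1 / (2 * Real.sqrt t)) / (Real.sqrt t) ^ 2) t :=
    (Real.hasDerivAt_sqrt ht.ne').inv hr.ne'
  have hg : HasFDerivAt (fun w : EuclideanSpace ℂ (Fin n) => (Real.sqrt (1 - ‖w‖ ^ 2))⁻¹)
      ((-(1 / (2 * Real.sqrt t)) / (Real.sqrt t) ^ 2) • (-((2:ℕ) • innerSL ℝ z))) z :=
    hsq.comp_hasFDerivAt (h₂ := fun x : ℝ => (Real.sqrt x)⁻¹) z hnorm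
  have hF : HasFDerivAt dualityMap
      ((Real.sqrt t)⁻¹ • ContinuousLinearMap.id ℝ (EuclideanSpace ℂ (Fin n)) +
        ((-(1 / (2 * Real.sqrt t)) / (Real.sqrt t) ^ 2) •
          (-((2:ℕ) • innerSL ℝ z))).smulRight z) z := by
    exact hg.smul (hasFDerivAt_id z)
  rw [hF.fderiv]
  have h2 : (Real.sqrt t) ^ 2 = t := Real.sq_sqrt ht.le
  simp only [ContinuousLinearMap.add_apply, ContinuousLinearMap.smul_apply,
    ContinuousLinearMap.id_apply, ContinuousLinearMap.smulRight_apply,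
    ContinuousLinearMap.neg_apply, innerSL_apply_apply, smul_add, smul_smul]
  congr 2
  simp only [nsmul_eq_mul, Nat.cast_ofNat]
  field_simp
  rw [← h2, Real.sqrt_sq hr.le]
  field_simp
  rw [smul_eq_mul]
  field_simp

/-- The duality map of the unit ball pulls the Fubini-Study form back to the flat form:
`F*ω₊ = ω₀`. -/
theorem ball_dualityMap_pullback_fubiniStudy_eq_flat (n : ℕ) (hn : 1 ≤ n) :
    ∀ z ∈ unitBall n, ∀ u v : EuclideanSpace ℂ (Fin n),
      omegaPlus (dualityMap z) (fderiv ℝ dualityMap z u) (fderiv ℝ dualityMap z v)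
        = omega0 u v := by
  intro z hz u v
  have hz' : ‖z‖ < 1 := hz
  have ht : (0:ℝ) < 1 - ‖z‖ ^ 2 := by nlinarith [norm_nonneg z]
  rw [duality_fderiv z hz' u, duality_fderiv z hz' v]
  set t : ℝ := 1 - ‖z‖ ^ 2 with htdef
  set a : ℝ := (Real.sqrt t)⁻¹ with hadef
  set cu : ℝ := t⁻¹ * (inner ℝ z u : ℝ) with hcudef
  set cv : ℝ := t⁻¹ * (inner ℝ z v : ℝ) with hcvdef
  set u' : EuclideanSpace ℂ (Fin n) := u + cu • z with hu'def
  set v' : EuclideanSpace ℂ (Fin n) := v + cv • z with hv'def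
  have hFz : dualityMap z = a • z := rfl
  have ha2 : a ^ 2 = t⁻¹ := by
    rw [hadef, ← Real.sqrt_inv, Real.sq_sqrt (by positivity)]
  have haa : (a : ℂ) * (a : ℂ) = ((t⁻¹ : ℝ) : ℂ) := by
    rw [← Complex.ofReal_mul, ← sq, ha2]
  have e4 : (1:ℝ) + ‖a • z‖ ^ 2 = t⁻¹ := by
    rw [norm_smul, mul_pow, Real.norm_eq_abs, _root_.sq_abs, ha2]
    have hs : ‖z‖ ^ 2 = 1 - t := by rw [htdef]; ring
    rw [hs]
    field_simp
    ring
  rw [hFz, omegaPlus]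
  rw [herm_real_smul_left, herm_real_smul_right, herm_real_smul_left, herm_real_smul_right,
    herm_real_smul_left, herm_real_smul_right, e4]
  have hne : ((t⁻¹ : ℝ) : ℂ) ≠ 0 := by
    simp [Complex.ofReal_ne_zero, ht.ne']
  have key : (((t⁻¹ : ℝ) : ℂ) * ((a:ℂ) * ((a:ℂ) * hermInner u' v'))
        - (a:ℂ) * ((a:ℂ) * hermInner u' z) * ((a:ℂ) * ((a:ℂ) * hermInner z v')))
        / (((t⁻¹ : ℝ) : ℂ)) ^ 2
      = hermInner u' v' - hermInner u' z * hermInner z v' := by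
    have : (a:ℂ) * ((a:ℂ) * hermInner u' v') = ((t⁻¹:ℝ):ℂ) * hermInner u' v' := by
      rw [← mul_assoc, haa]
    rw [this]
    have h2 : (a:ℂ) * ((a:ℂ) * hermInner u' z) = ((t⁻¹:ℝ):ℂ) * hermInner u' z := by
      rw [← mul_assoc, haa]
    have h3 : (a:ℂ) * ((a:ℂ) * hermInner z v') = ((t⁻¹:ℝ):ℂ) * hermInner z v' := by
      rw [← mul_assoc, haa]
    rw [h2, h3]
    have htC : ((t : ℝ) : ℂ) ≠ 0 := by
      simp [Complex.ofReal_ne_zero, ht.ne']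
    simp only [Complex.ofReal_inv]
    field_simp
  rw [key]
  -- expand the inner products
  have hzu : (inner ℝ z u : ℝ) = (hermInner u z).re := by
    rw [herm_re, herm_conj u z, Complex.conj_re]
  have hzv : (inner ℝ z v : ℝ) = (hermInner z v).re := herm_re z v
  rw [hu'def, hv'def]
  simp only [herm_add_left, herm_add_right, herm_real_smul_left, herm_real_smul_right,
    herm_self]
  rw [omega0]
  set A := hermInner u v
  set B := hermInner u z
  set C := hermInner z v
  have hs : ‖z‖ ^ 2 = 1 - t := by rw [htdef]; ring
  rw [hcudef, hcvdef, hzu, hzv, hs]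
  simp only [Complex.sub_im, Complex.add_im, Complex.mul_im, Complex.mul_re,
    Complex.ofReal_re, Complex.ofReal_im, Complex.add_re, Complex.sub_re]
  field_simp
  ring
end
end

section
/- Let n ≥ 1 and let f be a smooth diffeomorphism of Bⁿ onto itself such that B(f(z),f(z))(Df(z)u) = Df(z)(B(z,z)u) for all z ∈ Bⁿ and all u ∈ ℂⁿ, where B(z,z) denotes the Bergman operator of the ball. Then ‖f(z)‖ = ‖z‖ for all z ∈ Bⁿ. -/
open Complex Set

noncomputable section

lemma inner_self_ofReal {n : ℕ} (z : EuclideanSpace ℂ (Fin n)) :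
    (inner ℂ z z : ℂ) = ((‖z‖ ^ 2 : ℝ) : ℂ) := by
  rw [inner_self_eq_norm_sq_to_K]; norm_cast

lemma bergman_self {n : ℕ} (z : EuclideanSpace ℂ (Fin n)) :
    bergman z z = ((((1 : ℝ) - ‖z‖ ^ 2) ^ 2 : ℝ) : ℂ) • z := by
  unfold bergman hermInner
  rw [inner_self_ofReal, smul_sub, smul_smul, ← sub_smul]
  congr 1
  push_cast
  ring

lemma bergman_eigen {n : ℕ} (w x : EuclideanSpace ℂ (Fin n)) (hx : x ≠ 0) (μ : ℂ)
    (h : bergman w x = μ • x) :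
    μ = ((((1 : ℝ) - ‖w‖ ^ 2 : ℝ)) : ℂ) ∨ μ = ((((1 : ℝ) - ‖w‖ ^ 2 : ℝ)) : ℂ) ^ 2 := by
  set b : ℂ := ((((1 : ℝ) - ‖w‖ ^ 2 : ℝ)) : ℂ) with hb
  have hbW : b = 1 - ((‖w‖ ^ 2 : ℝ) : ℂ) := by rw [hb]; push_cast; ring
  have hinner : (inner ℂ w (bergman w x) : ℂ)
      = b * ((inner ℂ w x : ℂ) - (inner ℂ w x : ℂ) * ((‖w‖ ^ 2 : ℝ) : ℂ)) := by
    unfold bergman hermInner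
    rw [inner_smul_right, inner_sub_right, inner_smul_right, inner_self_ofReal]
  have hinner2 : (inner ℂ w (μ • x) : ℂ) = μ * (inner ℂ w x : ℂ) := by rw [inner_smul_right]
  have h2 := hinner.symm.trans ((congrArg (fun y => (inner ℂ w y : ℂ)) h).trans hinner2)
  have key : (inner ℂ w x : ℂ) * (b ^ 2 - μ) = 0 := by
    linear_combination h2 + ((inner ℂ w x : ℂ) * b) * hbW
  rcases mul_eq_zero.mp key with hS0 | hμ
  · left
    have hbx : bergman w x = b • x := by
      unfold bergman hermInner
      rw [hS0, zero_smul, sub_zero]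
    have h' : (b - μ) • x = 0 := by rw [sub_smul, ← hbx, h, sub_self]
    rcases smul_eq_zero.mp h' with h0 | h0
    · exact (sub_eq_zero.mp h0).symm
    · exact absurd h0 hx
  · right; exact (sub_eq_zero.mp hμ).symm

/-- A smooth diffeomorphism of the unit ball whose differential intertwines the Bergman
operators preserves the norm of every point. -/
theorem norm_preserving_of_bergman_intertwining (n : ℕ) (hn : 1 ≤ n)
    (f : EuclideanSpace ℂ (Fin n) → EuclideanSpace ℂ (Fin n))
    (hf : IsSmoothDiffeoOn f (unitBall n) (unitBall n))
    (hB : ∀ z ∈ unitBall n, ∀ u : EuclideanSpace ℂ (Fin n),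
      bergman (f z) (fderiv ℝ f z u) = fderiv ℝ f z (bergman z u)) :
    ∀ z ∈ unitBall n, ‖f z‖ = ‖z‖ := by
  obtain ⟨hf1, hfm, g, hg1, hgm, hginv⟩ := hf
  have hopen : IsOpen (unitBall n) := by
    have he : unitBall n = Metric.ball (0 : EuclideanSpace ℂ (Fin n)) 1 := by
      ext x; simp [unitBall, Metric.mem_ball, dist_zero_right]
    rw [he]; exact Metric.isOpen_ball
  intro z hz
  have hz1 : ‖z‖ < 1 := hz
  have hw : f z ∈ unitBall n := hfm hz
  have hw1 : ‖f z‖ < 1 := hw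
  have hdf : DifferentiableAt ℝ f z :=
    (hf1.differentiableOn (by simp)).differentiableAt (hopen.mem_nhds hz)
  have hdg : DifferentiableAt ℝ g (f z) :=
    (hg1.differentiableOn (by simp)).differentiableAt (hopen.mem_nhds hw)
  set A := fderiv ℝ f z with hA
  set G := fderiv ℝ g (f z) with hG
  -- G ∘ A = id
  have hGA : ∀ u, G (A u) = u := by
    have h1 : (g ∘ f) =ᶠ[nhds z] id := by
      filter_upwards [hopen.mem_nhds hz] with x hx using hginv.1 hx
    have h2 : fderiv ℝ (g ∘ f) z = G.comp A := fderiv_comp z hdg hdf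
    have h3 : fderiv ℝ (g ∘ f) z = ContinuousLinearMap.id ℝ _ := by
      rw [h1.fderiv_eq]; exact fderiv_id
    intro u
    have h4 := h2.symm.trans h3
    exact DFunLike.congr_fun h4 u
  -- A ∘ G = id
  have hgz : g (f z) = z := hginv.1 hz
  have hAG : ∀ u, A (G u) = u := by
    have h1 : (f ∘ g) =ᶠ[nhds (f z)] id := by
      filter_upwards [hopen.mem_nhds hw] with x hx using hginv.2 hx
    have hdf' : DifferentiableAt ℝ f (g (f z)) := by rw [hgz]; exact hdf
    have h2 : fderiv ℝ (f ∘ g) (f z) = (fderiv ℝ f (g (f z))).comp G := fderiv_comp (f z) hdf' hdg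
    have h2' : fderiv ℝ (f ∘ g) (f z) = A.comp G := by rw [h2, hgz, ← hA]
    have h3 : fderiv ℝ (f ∘ g) (f z) = ContinuousLinearMap.id ℝ _ := by
      rw [h1.fderiv_eq]; exact fderiv_id
    intro u
    exact DFunLike.congr_fun (h2'.symm.trans h3) u
  have hAinj : Function.Injective A := Function.LeftInverse.injective hGA
  set a : ℝ := 1 - ‖z‖ ^ 2 with ha
  set b : ℝ := 1 - ‖f z‖ ^ 2 with hb
  have hapos : 0 < a := by nlinarith [norm_nonneg z]
  have hbpos : 0 < b := by nlinarith [norm_nonneg (f z)]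
  -- relation 1 (if z ≠ 0): a² = b or a² = b²
  have rel1 : z ≠ 0 → (((a ^ 2 : ℝ)) : ℂ) = ((b : ℝ) : ℂ) ∨ (((a ^ 2 : ℝ)) : ℂ) = ((b : ℝ) : ℂ) ^ 2 := by
    intro hz0
    have hx := hB z hz z
    rw [bergman_self] at hx
    rw [Complex.coe_smul, A.map_smul, ← Complex.coe_smul] at hx
    have hAz : A z ≠ 0 := by
      intro h0
      apply hz0
      have := hGA z
      rw [h0] at this
      rw [← this, map_zero]
    exact bergman_eigen (f z) (A z) hAz _ hx
  -- relation 2 (if f z ≠ 0): b² = a or b² = a²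
  have rel2 : f z ≠ 0 → (((b ^ 2 : ℝ)) : ℂ) = ((a : ℝ) : ℂ) ∨ (((b ^ 2 : ℝ)) : ℂ) = ((a : ℝ) : ℂ) ^ 2 := by
    intro hw0
    have hu := hB z hz (G (f z))
    rw [hAG (f z), bergman_self] at hu
    have hu2 : bergman z (G (f z)) = (((b ^ 2 : ℝ)) : ℂ) • (G (f z)) := by
      apply hAinj
      rw [← hu, Complex.coe_smul, Complex.coe_smul, A.map_smul, hAG]
    have hGw : G (f z) ≠ 0 := by
      intro h0
      apply hw0
      have := hAG (f z)
      rw [h0] at this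
      rw [← this, map_zero]
    exact bergman_eigen z (G (f z)) hGw _ hu2
  -- real versions
  have rel1' : z ≠ 0 → a ^ 2 = b ∨ a ^ 2 = b ^ 2 := by
    intro h0
    rcases rel1 h0 with h | h
    · left; exact_mod_cast h
    · right; exact_mod_cast h
  have rel2' : f z ≠ 0 → b ^ 2 = a ∨ b ^ 2 = a ^ 2 := by
    intro h0
    rcases rel2 h0 with h | h
    · left; exact_mod_cast h
    · right; exact_mod_cast h
  clear_value A G
  clear rel1 rel2 hB hGA hAG hAinj hdf hdg hginv hgm hg1 hfm hf1 hgz hopen hA hG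
  clear A G
  clear_value a b
  -- conclude ‖f z‖² = ‖z‖²
  have hsq : ‖f z‖ ^ 2 = ‖z‖ ^ 2 := by
    have hz2 : (0:ℝ) ≤ ‖z‖ ^ 2 := sq_nonneg _
    have hw2 : (0:ℝ) ≤ ‖f z‖ ^ 2 := sq_nonneg _
    have hale : a ≤ 1 := by rw [ha]; linarith
    have hble : b ≤ 1 := by rw [hb]; linarith
    by_cases hz0 : z = 0
    · by_cases hw0 : f z = 0
      · rw [hw0, hz0]
      · have ha1 : a = 1 := by rw [ha, hz0]; simp
        have hb2 : b = 1 := by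
          rcases rel2' hw0 with h | h <;>
          · rw [ha1] at h
            have h5 : (b - 1) * (b + 1) = 0 := by linear_combination h
            rcases mul_eq_zero.mp h5 with h6 | h6 <;> linarith
        have e1 : ‖z‖ ^ 2 = 0 := by rw [ha] at ha1; linarith
        have e2 : ‖f z‖ ^ 2 = 0 := by rw [hb] at hb2; linarith
        rw [e1, e2]
    · have hza : 0 < ‖z‖ := norm_pos_iff.mpr hz0
      have halt : a < 1 := by rw [ha]; nlinarith
      by_cases hw0 : f z = 0
      · have hb1 : b = 1 := by rw [hb, hw0]; simp
        have ha2 : a = 1 := by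
          rcases rel1' hz0 with h | h <;>
          · rw [hb1] at h
            have h5 : (a - 1) * (a + 1) = 0 := by linear_combination h
            rcases mul_eq_zero.mp h5 with h6 | h6 <;> linarith
        linarith
      · have hwa : 0 < ‖f z‖ := norm_pos_iff.mpr hw0
        have hblt : b < 1 := by rw [hb]; nlinarith
        have hab : a = b := by
          rcases rel1' hz0 with h1 | h1 <;> rcases rel2' hw0 with h2 | h2
          · exfalso
            have h3 : a ^ 4 = a := by linear_combination (a ^ 2 + b) * h1 + h2
            have h4 : a ^ 3 < 1 := by nlinarith
            nlinarith [h3, mul_lt_mul_of_pos_left h4 hapos]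
          · have h5 : (b - a) * (b + a) = 0 := by linear_combination h2
            rcases mul_eq_zero.mp h5 with h6 | h6 <;> linarith
          · have h5 : (a - b) * (a + b) = 0 := by linear_combination h1
            rcases mul_eq_zero.mp h5 with h6 | h6 <;> linarith
          · have h5 : (a - b) * (a + b) = 0 := by linear_combination h1
            rcases mul_eq_zero.mp h5 with h6 | h6 <;> linarith
        rw [ha, hb] at hab
        linarith
  rw [← Real.sqrt_sq (norm_nonneg (f z)), ← Real.sqrt_sq (norm_nonneg z), hsq]
end
end
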